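/- arXiv:1701.06097 — 2 statements merged into one kernel-verified Lean document; each statement's English description precedes it below -/
import Mathlib

section
/- For any positive integer s, the integral over θ ∈ [0,1] of log(4 sin²(πθ) + 4 sin²(πsθ)) dθ is at least log 2. -/
open Real MeasureTheory intervalIntegral Set

noncomputable def Gfun (θ : ℝ) : ℝ := Real.log (2 * |Real.sin (π * θ)|)

lemma Gfun_periodic : Function.Periodic Gfun 1 := by
  intro x
  unfold Gfun
  rw [mul_add, mul_one, Real.sin_add_pi, abs_neg]

lemma intInt_log : IntervalIntegrable Real.log volume 0 1 := by
  have h : IntervalIntegrable (fun x : ℝ => -Real.log x) volume 0 1 := by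
    apply intervalIntegrable_deriv_of_nonneg (g := fun x : ℝ => x - x * Real.log x)
    · exact (continuous_id.sub Real.continuous_mul_log).continuousOn
    · intro x hx
      norm_num at hx
      have h1 := Real.hasDerivAt_mul_log (ne_of_gt hx.1)
      have h2 := (hasDerivAt_id x).sub h1
      refine h2.congr_deriv ?_
      ring
    · intro x hx
      norm_num at hx
      have : Real.log x ≤ 0 := Real.log_nonpos hx.1.le hx.2.le
      linarith
  have he : (-fun x : ℝ => -Real.log x) = Real.log := by funext x; simp
  simpa [he] using h.neg

lemma sin_pi_lb {θ : ℝ} (h0 : 0 < θ) (h1 : θ < 1) :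
    2 * θ * (1 - θ) ≤ Real.sin (π * θ) := by
  rcases le_total θ (1 / 2) with h | h
  · have h2 : 2 * θ ≤ Real.sin (π / 2 * (2 * θ)) :=
      Real.le_sin_mul (by linarith) (by linarith)
    have h3 : π / 2 * (2 * θ) = π * θ := by ring
    rw [h3] at h2
    nlinarith
  · have hsym : Real.sin (π * θ) = Real.sin (π * (1 - θ)) := by
      rw [show π * (1 - θ) = π - π * θ by ring, Real.sin_pi_sub]
    have h2 : 2 * (1 - θ) ≤ Real.sin (π / 2 * (2 * (1 - θ))) :=
      Real.le_sin_mul (by linarith) (by linarith)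
    have h3 : π / 2 * (2 * (1 - θ)) = π * (1 - θ) := by ring
    rw [h3] at h2
    rw [hsym]
    nlinarith

lemma Gfun_int01 : IntervalIntegrable Gfun volume 0 1 := by
  have hlog1 : IntervalIntegrable (fun x : ℝ => Real.log (1 - x)) volume 0 1 := by
    have := (intInt_log.comp_sub_left 1).symm
    norm_num at this
    exact this
  have hh : IntervalIntegrable
      (fun θ : ℝ => Real.log 2 + -Real.log θ + -Real.log (1 - θ)) volume 0 1 :=
    (intervalIntegrable_const.add intInt_log.neg).add hlog1.neg
  apply hh.mono_fun'
  · have hc : Continuous fun θ : ℝ => 2 * |Real.sin (π * θ)| :=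
      continuous_const.mul ((Real.continuous_sin.comp (continuous_const.mul continuous_id)).abs)
    exact (Real.measurable_log.comp hc.measurable).aestronglyMeasurable
  · rw [Filter.EventuallyLE, ae_restrict_iff' measurableSet_uIoc]
    filter_upwards with θ hθ
    rw [Set.uIoc_of_le (by norm_num : (0:ℝ) ≤ 1)] at hθ
    obtain ⟨h0, h1⟩ := hθ
    have hlog2 : (0:ℝ) ≤ Real.log 2 := Real.log_nonneg (by norm_num)
    rcases eq_or_lt_of_le h1 with rfl | h1
    · simp only [Gfun, Real.norm_eq_abs, mul_one]
      rw [Real.sin_pi]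
      norm_num
      linarith
    · have hs : 2 * θ * (1 - θ) ≤ Real.sin (π * θ) := sin_pi_lb h0 h1
      have hspos : 0 < Real.sin (π * θ) := by nlinarith
      have habs : |Real.sin (π * θ)| = Real.sin (π * θ) := abs_of_pos hspos
      have hlogθ : Real.log θ ≤ 0 := Real.log_nonpos h0.le h1.le
      have hlog1θ : Real.log (1 - θ) ≤ 0 := Real.log_nonpos (by linarith) (by linarith)
      have hub : Gfun θ ≤ Real.log 2 := by
        unfold Gfun
        apply Real.log_le_log (by rw [habs]; linarith)
        rw [habs]
        have := Real.sin_le_one (π * θ)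
        linarith
      have hlb : Real.log 2 + Real.log 2 + Real.log θ + Real.log (1 - θ) ≤ Gfun θ := by
        have key : Real.log (2 * (2 * θ * (1 - θ))) ≤ Gfun θ := by
          unfold Gfun
          apply Real.log_le_log (by nlinarith)
          rw [habs]; nlinarith
        have e : Real.log (2 * (2 * θ * (1 - θ)))
            = Real.log 2 + Real.log 2 + Real.log θ + Real.log (1 - θ) := by
          rw [show (2:ℝ) * (2 * θ * (1 - θ)) = 2 * (2 * (θ * (1 - θ))) by ring]
          have hp1 : (0:ℝ) < θ * (1 - θ) := by nlinarith
          rw [Real.log_mul (by norm_num) (ne_of_gt (by linarith : (0:ℝ) < 2 * (θ * (1 - θ)))),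
            Real.log_mul (by norm_num) (ne_of_gt hp1),
            Real.log_mul (ne_of_gt h0) (ne_of_gt (by linarith : (0:ℝ) < 1 - θ))]
          ring
        linarith [e ▸ key]
      rw [Real.norm_eq_abs, abs_le]
      constructor <;> linarith

lemma GInt (n : ℤ) : IntervalIntegrable Gfun volume n (n + 1) := by
  have h := Gfun_int01.comp_sub_right (n : ℝ)
  have hfe : (fun x : ℝ => Gfun (x - (n : ℝ))) = Gfun := by
    funext x
    have := Gfun_periodic.sub_int_mul_eq (x := x) n
    simpa using this
  rw [hfe] at h
  have e0 : (0 : ℝ) + n = (n : ℝ) := by ring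
  have e1 : (1 : ℝ) + n = (n : ℝ) + 1 := by ring
  rwa [e0, e1] at h

lemma GIntN (n : ℕ) : IntervalIntegrable Gfun volume 0 n := by
  induction n with
  | zero => simp
  | succ k ih =>
    have h := GInt (k : ℤ)
    push_cast at h ⊢
    exact ih.trans h

lemma integral_G_shift (t : ℝ) : ∫ x in t..(t + 1), Gfun x = ∫ x in (0:ℝ)..1, Gfun x := by
  simpa using Gfun_periodic.intervalIntegral_add_eq t 0

lemma integral_G_nat (n : ℕ) :
    ∫ x in (0:ℝ)..(n : ℝ), Gfun x = (n : ℝ) * ∫ x in (0:ℝ)..1, Gfun x := by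
  induction n with
  | zero => simp
  | succ k ih =>
    have hadj : (∫ x in (0:ℝ)..(k : ℝ), Gfun x) + ∫ x in (k:ℝ)..((k:ℝ) + 1), Gfun x
        = ∫ x in (0:ℝ)..((k:ℝ) + 1), Gfun x := by
      apply integral_add_adjacent_intervals (GIntN k)
      have h := GInt (k : ℤ)
      push_cast at h
      exact h
    push_cast
    rw [← hadj, ih, integral_G_shift]
    ring

noncomputable def Cfun (θ : ℝ) : ℝ := Real.log (2 * |Real.cos (π * θ)|)

lemma Cfun_eq : Cfun = fun θ => Gfun (θ + 1 / 2) := by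
  funext θ
  unfold Cfun Gfun
  rw [show π * (θ + 1 / 2) = π * θ + π / 2 by ring, Real.sin_add_pi_div_two]

lemma Cfun_int : IntervalIntegrable Cfun volume 0 1 := by
  rw [Cfun_eq]
  have h2 : IntervalIntegrable Gfun volume (1/2) (3/2) := by
    apply (GIntN 2).mono_set
    rw [Set.uIcc_of_le (by norm_num : (1/2:ℝ) ≤ 3/2),
      Set.uIcc_of_le (by norm_num : (0:ℝ) ≤ ((2:ℕ):ℝ))]
    apply Set.Icc_subset_Icc <;> norm_num
  have h := h2.comp_add_right (1/2)
  norm_num at h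
  exact h

lemma null_sin (c : ℝ) (hc : c ≠ 0) : volume {θ : ℝ | Real.sin (c * θ) = 0} = 0 := by
  have hsub : {θ : ℝ | Real.sin (c * θ) = 0} ⊆ Set.range (fun n : ℤ => (n : ℝ) * π / c) := by
    intro θ hθ
    obtain ⟨n, hn⟩ := Real.sin_eq_zero_iff.mp hθ
    exact ⟨n, by show (n:ℝ) * π / c = θ; rw [hn, mul_div_cancel_left₀ _ hc]⟩
  exact measure_mono_null hsub ((Set.countable_range _).measure_zero _)

lemma ae_sin_ne (c : ℝ) (hc : c ≠ 0) : ∀ᵐ θ : ℝ, Real.sin (c * θ) ≠ 0 := by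
  rw [ae_iff]
  simpa using null_sin c hc

lemma I_eq_zero : ∫ x in (0:ℝ)..1, Gfun x = 0 := by
  have hae : ∀ᵐ θ : ℝ, Gfun (2 * θ) = Gfun θ + Cfun θ := by
    filter_upwards [ae_sin_ne (2 * π) (by positivity)] with θ hθ
    rw [show 2 * π * θ = 2 * (π * θ) by ring, Real.sin_two_mul] at hθ
    have hu : Real.sin (π * θ) ≠ 0 := fun h => hθ (by rw [h]; ring)
    have hv : Real.cos (π * θ) ≠ 0 := fun h => hθ (by rw [h]; ring)
    unfold Gfun Cfun
    rw [show π * (2 * θ) = 2 * (π * θ) by ring, Real.sin_two_mul, abs_mul, abs_mul, abs_two,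
      show (2:ℝ) * (2 * |Real.sin (π * θ)| * |Real.cos (π * θ)|)
        = 2 * |Real.sin (π * θ)| * (2 * |Real.cos (π * θ)|) by ring]
    exact Real.log_mul (by simp [hu]) (by simp [hv])
  have h1 : ∫ θ in (0:ℝ)..1, Gfun (2 * θ) = ∫ x in (0:ℝ)..1, Gfun x := by
    rw [integral_comp_mul_left Gfun two_ne_zero]
    norm_num
    have h2 : ∫ x in (0:ℝ)..2, Gfun x = ((2:ℕ):ℝ) * ∫ x in (0:ℝ)..1, Gfun x := by
      have := integral_G_nat 2
      push_cast at this ⊢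
      exact this
    push_cast at h2
    rw [h2]
    ring
  have h2 : ∫ θ in (0:ℝ)..1, (Gfun θ + Cfun θ)
      = (∫ x in (0:ℝ)..1, Gfun x) + ∫ x in (0:ℝ)..1, Gfun x := by
    rw [intervalIntegral.integral_add Gfun_int01 Cfun_int]
    congr 1
    rw [Cfun_eq]
    rw [intervalIntegral.integral_comp_add_right (a := (0:ℝ)) (b := 1) Gfun (1/2)]
    have hsh := integral_G_shift (1/2 : ℝ)
    norm_num at hsh ⊢
    exact hsh
  have hcongr : ∫ θ in (0:ℝ)..1, Gfun (2 * θ) = ∫ θ in (0:ℝ)..1, (Gfun θ + Cfun θ) :=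
    intervalIntegral.integral_congr_ae (hae.mono fun x hx _ => hx)
  have := h1.symm.trans (hcongr.trans h2)
  linarith

theorem mahler_measure_laplacian_two_edge_orbits_ge_log_two (s : ℕ) (hs : 0 < s) :
    Real.log 2 ≤
      ∫ θ in (0:ℝ)..1,
        Real.log (4 * Real.sin (π * θ) ^ 2 + 4 * Real.sin (π * s * θ) ^ 2) := by
  have hsne : (s : ℝ) ≠ 0 := Nat.cast_ne_zero.mpr hs.ne'
  set h : ℝ → ℝ := fun θ =>
    Real.log (4 * Real.sin (π * θ) ^ 2 + 4 * Real.sin (π * s * θ) ^ 2) with hh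
  set F : ℝ → ℝ := fun θ => Real.log 2 + Gfun θ + Gfun (s * θ) with hFdef
  have hGs_int : IntervalIntegrable (fun θ : ℝ => Gfun ((s:ℝ) * θ)) volume 0 1 := by
    have := (GIntN s).comp_mul_left (c := (s : ℝ))
    rw [zero_div, div_self hsne] at this
    exact this
  have hFint : IntervalIntegrable F volume 0 1 :=
    (intervalIntegrable_const.add Gfun_int01).add hGs_int
  have haeF : ∀ᵐ θ : ℝ, F θ ≤ h θ := by
    filter_upwards [ae_sin_ne π Real.pi_ne_zero, ae_sin_ne (π * s) (by positivity)]
      with θ hu hv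
    have hu' : |Real.sin (π * θ)| ≠ 0 := abs_ne_zero.mpr hu
    have hv' : |Real.sin (π * (s:ℝ) * θ)| ≠ 0 := abs_ne_zero.mpr hv
    have key : F θ = Real.log (2 * (2 * |Real.sin (π * θ)|) * (2 * |Real.sin (π * (s:ℝ) * θ)|)) := by
      simp only [hFdef, Gfun]
      rw [show π * ((s:ℝ) * θ) = π * (s:ℝ) * θ by ring]
      rw [Real.log_mul (mul_ne_zero two_ne_zero (mul_ne_zero two_ne_zero hu'))
          (mul_ne_zero two_ne_zero hv'),
        Real.log_mul two_ne_zero (mul_ne_zero two_ne_zero hu')]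
    rw [hh, key]
    apply Real.log_le_log (by positivity)
    have h1 := sq_abs (Real.sin (π * θ))
    have h2 := sq_abs (Real.sin (π * (s:ℝ) * θ))
    nlinarith [sq_nonneg (|Real.sin (π * θ)| - |Real.sin (π * (s:ℝ) * θ)|),
      abs_nonneg (Real.sin (π * θ)), abs_nonneg (Real.sin (π * (s:ℝ) * θ))]
  have hle8 : ∀ θ : ℝ, h θ ≤ Real.log 8 := by
    intro θ
    rcases eq_or_lt_of_le (by positivity :
        (0:ℝ) ≤ 4 * Real.sin (π * θ) ^ 2 + 4 * Real.sin (π * s * θ) ^ 2) with he | hp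
    · rw [hh]
      simp only [← he, Real.log_zero]
      exact Real.log_nonneg (by norm_num)
    · apply Real.log_le_log hp
      nlinarith [Real.sin_le_one (π * θ), Real.neg_one_le_sin (π * θ),
        Real.sin_le_one (π * (s:ℝ) * θ), Real.neg_one_le_sin (π * (s:ℝ) * θ)]
  have hhint : IntervalIntegrable h volume 0 1 := by
    apply IntervalIntegrable.mono_fun' (g := fun θ => Real.log 8 + |F θ|)
      (intervalIntegrable_const.add hFint.abs)
    · apply Measurable.aestronglyMeasurable
      apply Real.measurable_log.comp
      fun_prop
    · apply ae_restrict_of_ae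
      filter_upwards [haeF] with θ hθ
      have hl8 : (0:ℝ) ≤ Real.log 8 := Real.log_nonneg (by norm_num)
      have := hle8 θ
      rw [Real.norm_eq_abs, abs_le]
      constructor
      · have := neg_abs_le (F θ); linarith
      · have := abs_nonneg (F θ); linarith
  have hintF : ∫ θ in (0:ℝ)..1, F θ = Real.log 2 := by
    rw [hFdef]
    rw [intervalIntegral.integral_add (intervalIntegrable_const.add Gfun_int01) hGs_int,
      intervalIntegral.integral_add intervalIntegrable_const Gfun_int01]
    have hGs0 : ∫ θ in (0:ℝ)..1, Gfun ((s:ℝ) * θ) = 0 := by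
      rw [integral_comp_mul_left Gfun hsne]
      rw [mul_zero, mul_one]
      have := integral_G_nat s
      rw [this, I_eq_zero]
      simp
    rw [hGs0, I_eq_zero, intervalIntegral.integral_const]
    simp
  calc Real.log 2 = ∫ θ in (0:ℝ)..1, F θ := hintF.symm
    _ ≤ ∫ θ in (0:ℝ)..1, h θ :=
      intervalIntegral.integral_mono_ae zero_le_one hFint hhint haeF
end

section
/- For each d, ∫₀¹⋯∫₀¹ log|1 + (1/d)Σᵢ₌₁^d cos(2πθᵢ)| dθ₁⋯dθ_d ≤ 0, i.e., the logarithmic Mahler measure of 2d - Σ(xᵢ + xᵢ^{-1}) equals log(2d) plus a nonpositive correction term. -/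
open Real MeasureTheory Set

noncomputable section AuxGrid

/-- The half-shift map on `[0,1)`. -/
def Sh (t : ℝ) : ℝ := if t < 2⁻¹ then t + 2⁻¹ else t + -2⁻¹

lemma Sh_measurable : Measurable Sh := by
  unfold Sh
  exact Measurable.ite (measurableSet_lt measurable_id measurable_const)
    (measurable_add_const _) (measurable_add_const _)

lemma cos_Sh (t : ℝ) : Real.cos (2 * π * Sh t) = - Real.cos (2 * π * t) := by
  unfold Sh
  split_ifs with h
  · rw [show 2 * π * (t + 2⁻¹) = 2 * π * t + π by ring, Real.cos_add_pi]
  · rw [show 2 * π * (t + -2⁻¹) = 2 * π * t - π by ring, Real.cos_sub_pi]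

lemma restrict_Icc_eq_Ico :
    volume.restrict (Set.Icc (0:ℝ) 1) = volume.restrict (Set.Ico (0:ℝ) 1) :=
  (Measure.restrict_congr_set MeasureTheory.Ico_ae_eq_Icc).symm

lemma map_shift_restrict (c : ℝ) (A B : Set ℝ) (hB : MeasurableSet B)
    (hAB : (fun t : ℝ => t + c) ⁻¹' B = A) :
    Measure.map (fun t : ℝ => t + c) (volume.restrict A) = volume.restrict B := by
  rw [← hAB, ← Measure.restrict_map (measurable_add_const c) hB,
    map_add_right_eq_self volume c]

lemma Sh_measurePreserving :
    MeasurePreserving Sh (volume.restrict (Set.Icc (0:ℝ) 1))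
      (volume.restrict (Set.Icc (0:ℝ) 1)) := by
  refine ⟨Sh_measurable, ?_⟩
  rw [restrict_Icc_eq_Ico]
  have hdisj : Disjoint (Set.Ico (0:ℝ) 2⁻¹) (Set.Ico (2⁻¹:ℝ) 1) := by
    rw [Set.disjoint_left]; rintro t ⟨_, h2⟩ ⟨h3, _⟩; linarith
  have hsplit : volume.restrict (Set.Ico (0:ℝ) 1) =
      volume.restrict (Set.Ico (0:ℝ) 2⁻¹) + volume.restrict (Set.Ico (2⁻¹:ℝ) 1) := by
    rw [← Measure.restrict_union hdisj measurableSet_Ico,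
      Set.Ico_union_Ico_eq_Ico (by norm_num) (by norm_num)]
  have h1 : Measure.map Sh (volume.restrict (Set.Ico (0:ℝ) 2⁻¹)) =
      volume.restrict (Set.Ico (2⁻¹:ℝ) 1) := by
    have he : Sh =ᵐ[volume.restrict (Set.Ico (0:ℝ) 2⁻¹)] (· + 2⁻¹) := by
      refine (ae_restrict_iff' measurableSet_Ico).2 (Filter.Eventually.of_forall ?_)
      intro t ht; simp [Sh, ht.2]
    rw [Measure.map_congr he]
    refine map_shift_restrict _ _ _ measurableSet_Ico ?_
    ext t; simp only [Set.mem_preimage, Set.mem_Ico]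
    constructor <;> intro h <;> exact ⟨by linarith [h.1, h.2], by linarith [h.1, h.2]⟩
  have h2 : Measure.map Sh (volume.restrict (Set.Ico (2⁻¹:ℝ) 1)) =
      volume.restrict (Set.Ico (0:ℝ) 2⁻¹) := by
    have he : Sh =ᵐ[volume.restrict (Set.Ico (2⁻¹:ℝ) 1)] (· + -2⁻¹) := by
      refine (ae_restrict_iff' measurableSet_Ico).2 (Filter.Eventually.of_forall ?_)
      intro t ht; simp [Sh, not_lt.2 ht.1]
    rw [Measure.map_congr he]
    refine map_shift_restrict _ _ _ measurableSet_Ico ?_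
    ext t; simp only [Set.mem_preimage, Set.mem_Ico]
    constructor <;> intro h <;> exact ⟨by linarith [h.1, h.2], by linarith [h.1, h.2]⟩
  rw [hsplit, Measure.map_add _ _ Sh_measurable, h1, h2, add_comm]

instance : IsProbabilityMeasure (volume.restrict (Set.Icc (0:ℝ) 1)) :=
  ⟨by simp [Real.volume_Icc]⟩

lemma restrict_box_eq_pi (d : ℕ) :
    (volume : Measure (Fin d → ℝ)).restrict (Set.univ.pi fun _ => Set.Icc (0:ℝ) 1) =
      Measure.pi (fun _ : Fin d => volume.restrict (Set.Icc (0:ℝ) 1)) := by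
  refine (Measure.pi_eq fun s hs => ?_).symm
  rw [Measure.restrict_apply (MeasurableSet.univ_pi hs), ← Set.pi_inter_distrib,
    MeasureTheory.volume_pi, Measure.pi_pi]
  simp_rw [Measure.restrict_apply (hs _)]

lemma eval_measurePreserving {d : ℕ} (i : Fin d) :
    MeasurePreserving (Function.eval i)
      (Measure.pi (fun _ : Fin d => volume.restrict (Set.Icc (0:ℝ) 1)))
      (volume.restrict (Set.Icc (0:ℝ) 1)) := by
  refine ⟨measurable_pi_apply i, ?_⟩
  refine Measure.ext fun s hs => ?_
  rw [Measure.map_apply (measurable_pi_apply i) hs, Set.eval_preimage, Measure.pi_pi]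
  rw [Finset.prod_eq_single_of_mem i (Finset.mem_univ i)
    (fun j _ hj => by simp [Function.update_of_ne hj])]
  simp

lemma integral_eval {d : ℕ} (i : Fin d) (f : ℝ → ℝ) (hf : Measurable f) :
    ∫ θ, f (θ i) ∂(Measure.pi (fun _ : Fin d => volume.restrict (Set.Icc (0:ℝ) 1))) =
      ∫ t, f t ∂(volume.restrict (Set.Icc (0:ℝ) 1)) := by
  have h := integral_map (φ := Function.eval i)
    ((measurable_pi_apply i).aemeasurable
      (μ := Measure.pi fun _ : Fin d => volume.restrict (Set.Icc (0:ℝ) 1))) (f := f)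
    hf.aestronglyMeasurable
  rw [(eval_measurePreserving i).map_eq] at h
  exact h.symm

lemma integrable_eval {d : ℕ} (i : Fin d) (f : ℝ → ℝ) (hf : Measurable f)
    (h : Integrable f (volume.restrict (Set.Icc (0:ℝ) 1))) :
    Integrable (fun θ => f (θ i))
      (Measure.pi (fun _ : Fin d => volume.restrict (Set.Icc (0:ℝ) 1))) :=
  ((eval_measurePreserving i).integrable_comp hf.aestronglyMeasurable).2 h

lemma integral_cos01 : ∫ t in Set.Icc (0:ℝ) 1, Real.cos (2 * π * t) = 0 := by
  rw [MeasureTheory.integral_Icc_eq_integral_Ioc,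
    ← intervalIntegral.integral_of_le (by norm_num : (0:ℝ) ≤ 1)]
  have : ∫ t in (0:ℝ)..1, Real.cos (2 * π * t) =
      ∫ t in (0:ℝ)..1, Real.cos ((2 * π) * t) := by norm_num [mul_assoc]
  rw [this, intervalIntegral.integral_comp_mul_left (fun x => Real.cos x)
    (by positivity : (2*π) ≠ 0)]
  simp [Real.sin_two_pi]

lemma one_sub_cos_ge {t : ℝ} (h0 : 0 ≤ t) (h1 : t ≤ 1) :
    8 * (t * (1 - t)) ^ 2 ≤ 1 - Real.cos (2 * π * t) := by
  have hsq : 1 - Real.cos (2 * π * t) = 2 * Real.sin (π * t) ^ 2 := by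
    have h := Real.cos_sq (π * t)
    have h2 := Real.sin_sq_add_cos_sq (π * t)
    have : 2 * (π * t) = 2 * π * t := by ring
    rw [this] at h
    nlinarith
  have key : 2 * (t * (1 - t)) ≤ Real.sin (π * t) := by
    rcases le_total t 2⁻¹ with h | h
    · have := Real.mul_le_sin (x := π * t) (by positivity)
        (by nlinarith [Real.pi_pos])
      have h2 : 2 / π * (π * t) = 2 * t := by field_simp
      nlinarith
    · have hs : Real.sin (π * t) = Real.sin (π * (1 - t)) := by
        rw [show π * (1 - t) = π - π * t by ring, Real.sin_pi_sub]
      have := Real.mul_le_sin (x := π * (1 - t)) (by nlinarith [Real.pi_pos])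
        (by nlinarith [Real.pi_pos])
      have h2 : 2 / π * (π * (1 - t)) = 2 * (1 - t) := by field_simp
      nlinarith
  have hsin : 0 ≤ Real.sin (π * t) :=
    Real.sin_nonneg_of_nonneg_of_le_pi (by positivity) (by nlinarith [Real.pi_pos])
  have hy : 0 ≤ t * (1 - t) := mul_nonneg h0 (by linarith)
  have h4 : (2 * (t * (1 - t))) ^ 2 ≤ Real.sin (π * t) ^ 2 := by nlinarith
  nlinarith

lemma integrableOn_log01 : IntegrableOn Real.log (Set.Ioc (0:ℝ) 1) := by
  have h : IntegrableOn (fun x : ℝ => -Real.log x) (Set.Ioc (0:ℝ) 1) := by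
    apply intervalIntegral.integrableOn_deriv_of_nonneg
      (g := fun x : ℝ => x - x * Real.log x)
    · exact (continuous_id.sub Real.continuous_mul_log).continuousOn
    · intro x hx
      have hx0 : x ≠ 0 := ne_of_gt hx.1
      exact ((hasDerivAt_id' x).sub (Real.hasDerivAt_mul_log hx0)).congr_deriv (by ring)
    · intro x hx
      simpa using Real.log_nonpos hx.1.le hx.2.le
  exact h.neg.congr (Filter.Eventually.of_forall fun x => by simp)

lemma integrableOn_abs_log : IntegrableOn (fun t => |Real.log t|) (Set.Icc (0:ℝ) 1) := by
  have : IntegrableOn (fun t => |Real.log t|) (Set.Ioc (0:ℝ) 1) := integrableOn_log01.abs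
  rwa [IntegrableOn, Measure.restrict_congr_set MeasureTheory.Ioc_ae_eq_Icc] at this

lemma integrableOn_abs_log_one_sub :
    IntegrableOn (fun t => |Real.log (1 - t)|) (Set.Icc (0:ℝ) 1) := by
  have hmp : MeasurePreserving (fun x : ℝ => 1 - x) volume volume := by
    have := (measurePreserving_add_left (volume : Measure ℝ) 1).comp
      (Measure.measurePreserving_neg (volume : Measure ℝ))
    convert this using 1
    funext x
    simp [sub_eq_add_neg]
  have hemb : MeasurableEmbedding (fun x : ℝ => 1 - x) :=
    (Homeomorph.subLeft (1:ℝ)).measurableEmbedding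
  have hpre : (fun x : ℝ => 1 - x) ⁻¹' (Set.Icc (0:ℝ) 1) = Set.Icc (0:ℝ) 1 := by
    ext t; simp only [Set.mem_preimage, Set.mem_Icc]
    constructor <;> intro h <;> exact ⟨by linarith [h.1, h.2], by linarith [h.1, h.2]⟩
  have := (hmp.integrableOn_comp_preimage hemb
    (s := Set.Icc (0:ℝ) 1) (f := fun t => |Real.log t|)).2 integrableOn_abs_log
  rw [hpre] at this
  exact this


lemma measurableSet_cos_eq (c : ℝ) : MeasurableSet {t : ℝ | Real.cos (2 * π * t) = c} := by
  have m : Measurable fun t : ℝ => Real.cos (2 * π * t) :=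
    (Real.continuous_cos.comp (continuous_const.mul continuous_id)).measurable
  exact m (measurableSet_singleton c)

lemma volume_cos_eq_neg_one : volume {t : ℝ | Real.cos (2 * π * t) = -1} = 0 := by
  have hsub : {t : ℝ | Real.cos (2 * π * t) = -1} ⊆ Set.range fun n : ℤ => (n : ℝ) + 2⁻¹ := by
    intro t ht
    have h1 : Real.cos (2 * π * t - π) = 1 := by
      rw [Real.cos_sub_pi, Set.mem_setOf_eq.mp ht]; ring
    obtain ⟨n, hn⟩ := (Real.cos_eq_one_iff _).1 h1
    refine ⟨n, ?_⟩
    have h2 : (2 * π) * ((n:ℝ) + 2⁻¹) = (2 * π) * t := by linear_combination hn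
    exact mul_left_cancel₀ (by positivity : (2:ℝ) * π ≠ 0) h2
  exact measure_mono_null hsub ((Set.countable_range _).measure_zero _)

lemma volume_cos_eq_one : volume {t : ℝ | Real.cos (2 * π * t) = 1} = 0 := by
  have hsub : {t : ℝ | Real.cos (2 * π * t) = 1} ⊆ Set.range fun n : ℤ => (n : ℝ) := by
    intro t ht
    obtain ⟨n, hn⟩ := (Real.cos_eq_one_iff _).1 ht
    refine ⟨n, ?_⟩
    have h2 : (2 * π) * (n:ℝ) = (2 * π) * t := by linear_combination hn
    exact mul_left_cancel₀ (by positivity : (2:ℝ) * π ≠ 0) h2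
  exact measure_mono_null hsub ((Set.countable_range _).measure_zero _)

lemma P_null_of_cos (d : ℕ) (hd : 1 ≤ d) (c : ℝ)
    (hvol : volume {t : ℝ | Real.cos (2 * π * t) = c} = 0)
    (N : Set (Fin d → ℝ))
    (hN : N ⊆ Set.univ.pi fun _ => {t : ℝ | Real.cos (2 * π * t) = c}) :
    Measure.pi (fun _ : Fin d => volume.restrict (Set.Icc (0:ℝ) 1)) N = 0 := by
  refine measure_mono_null hN ?_
  rw [Measure.pi_pi]
  refine Finset.prod_eq_zero (Finset.mem_univ (⟨0, hd⟩ : Fin d)) ?_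
  rw [Measure.restrict_apply (measurableSet_cos_eq c)]
  exact le_antisymm (le_trans (measure_mono Set.inter_subset_left) hvol.le) zero_le

lemma ae_sum_cos_ne_neg (d : ℕ) (hd : 1 ≤ d) :
    ∀ᵐ θ ∂(Measure.pi (fun _ : Fin d => volume.restrict (Set.Icc (0:ℝ) 1))),
      ∑ i, Real.cos (2 * π * θ i) ≠ -(d:ℝ) := by
  rw [ae_iff]
  simp only [not_not]
  refine P_null_of_cos d hd (-1) volume_cos_eq_neg_one _ ?_
  intro θ hθ
  have hsum : ∑ i, (1 + Real.cos (2 * π * θ i)) = 0 := by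
    rw [Finset.sum_add_distrib, Set.mem_setOf_eq.mp hθ]
    simp
  have hall := (Finset.sum_eq_zero_iff_of_nonneg
    (fun i _ => by linarith [Real.neg_one_le_cos (2 * π * θ i)])).1 hsum
  intro i _
  have := hall i (Finset.mem_univ i)
  show Real.cos (2 * π * θ i) = -1
  linarith

lemma ae_sum_cos_ne_pos (d : ℕ) (hd : 1 ≤ d) :
    ∀ᵐ θ ∂(Measure.pi (fun _ : Fin d => volume.restrict (Set.Icc (0:ℝ) 1))),
      ∑ i, Real.cos (2 * π * θ i) ≠ (d:ℝ) := by
  rw [ae_iff]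
  simp only [not_not]
  refine P_null_of_cos d hd 1 volume_cos_eq_one _ ?_
  intro θ hθ
  have hsum : ∑ i, (1 - Real.cos (2 * π * θ i)) = 0 := by
    rw [Finset.sum_sub_distrib, Set.mem_setOf_eq.mp hθ]
    simp
  have hall := (Finset.sum_eq_zero_iff_of_nonneg
    (fun i _ => by linarith [Real.cos_le_one (2 * π * θ i)])).1 hsum
  intro i _
  have := hall i (Finset.mem_univ i)
  show Real.cos (2 * π * θ i) = 1
  linarith

lemma abs_log_one_sub_bound {d : ℕ} (hd : 1 ≤ d) {θ : Fin d → ℝ}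
    (ht : θ (⟨0, hd⟩ : Fin d) ∈ Set.Ioo (0:ℝ) 1) :
    abs (Real.log |1 - (1 / (d:ℝ)) * ∑ i, Real.cos (2 * π * θ i)|) ≤
      (Real.log 2 + |Real.log (8 / (d:ℝ))|) + 2 * |Real.log (θ ⟨0, hd⟩)| +
        2 * |Real.log (1 - θ ⟨0, hd⟩)| := by
  have hd0 : (0:ℝ) < d := by exact_mod_cast hd
  set t := θ (⟨0, hd⟩ : Fin d) with htdef
  set S := ∑ i, Real.cos (2 * π * θ i) with hSdef
  have ht0 : 0 < t := ht.1
  have ht1 : t < 1 := ht.2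
  have hcard : ∑ _i : Fin d, (1:ℝ) = d := by simp
  have hS_le : S ≤ d := by
    rw [hSdef, ← hcard]
    exact Finset.sum_le_sum fun i _ => Real.cos_le_one _
  have hS_ge : -(d:ℝ) ≤ S := by
    have : ∑ _i : Fin d, (-1:ℝ) ≤ S :=
      Finset.sum_le_sum fun i _ => Real.neg_one_le_cos _
    simpa using this
  have hub : 1 - (1/(d:ℝ)) * S ≤ 2 := by
    have h1 : (1/(d:ℝ)) * (-(d:ℝ)) ≤ (1/(d:ℝ)) * S :=
      mul_le_mul_of_nonneg_left hS_ge (by positivity)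
    have h2 : (1/(d:ℝ)) * (-(d:ℝ)) = -1 := by field_simp
    linarith [h2 ▸ h1]
  have hkey : 1 - Real.cos (2 * π * t) ≤ (d:ℝ) - S := by
    have h1 : 1 - Real.cos (2 * π * t) ≤ ∑ i, (1 - Real.cos (2 * π * θ i)) :=
      Finset.single_le_sum (f := fun i => 1 - Real.cos (2 * π * θ i))
        (fun i _ => by
          show (0:ℝ) ≤ 1 - Real.cos (2 * π * θ i)
          linarith [Real.cos_le_one (2 * π * θ i)]) (Finset.mem_univ (⟨0, hd⟩ : Fin d))
    rw [Finset.sum_sub_distrib, hcard] at h1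
    exact h1
  have hA : (8/(d:ℝ)) * (t * (1 - t))^2 ≤ 1 - (1/(d:ℝ)) * S := by
    have h1 : 8 * (t * (1 - t))^2 ≤ (d:ℝ) - S :=
      le_trans (one_sub_cos_ge ht0.le ht1.le) hkey
    have h2 : (8/(d:ℝ)) * (t * (1 - t))^2 = (8 * (t * (1 - t))^2) / d := by ring
    have h3 : 1 - (1/(d:ℝ)) * S = ((d:ℝ) - S) / d := by field_simp
    rw [h2, h3]
    gcongr
  have hApos : 0 < (8/(d:ℝ)) * (t * (1 - t))^2 := by
    have : 0 < t * (1 - t) := mul_pos ht0 (by linarith)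
    positivity
  have hpos : 0 < 1 - (1/(d:ℝ)) * S := lt_of_lt_of_le hApos hA
  rw [abs_of_pos hpos]
  have hlogA : Real.log ((8/(d:ℝ)) * (t * (1 - t))^2) =
      Real.log (8/(d:ℝ)) + 2 * (Real.log t + Real.log (1 - t)) := by
    have hy0 : 0 < t * (1 - t) := mul_pos ht0 (by linarith)
    rw [Real.log_mul (ne_of_gt (div_pos (by norm_num) hd0)) (pow_ne_zero _ (ne_of_gt hy0)),
      Real.log_pow,
      Real.log_mul (ne_of_gt ht0) (ne_of_gt (by linarith : (0:ℝ) < 1 - t))]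
    push_cast; ring
  have hle1 : Real.log (1 - (1/(d:ℝ)) * S) ≤ Real.log 2 := Real.log_le_log hpos hub
  have hge : Real.log ((8/(d:ℝ)) * (t * (1 - t))^2) ≤ Real.log (1 - (1/(d:ℝ)) * S) :=
    Real.log_le_log hApos hA
  have hlog2 : (0:ℝ) ≤ Real.log 2 := Real.log_nonneg (by norm_num)
  rcases abs_cases (Real.log (1 - (1/(d:ℝ)) * S)) with ⟨heq, _⟩ | ⟨heq, _⟩ <;> rw [heq]
  · have := abs_nonneg (Real.log (8/(d:ℝ)))
    have := abs_nonneg (Real.log t)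
    have := abs_nonneg (Real.log (1 - t))
    linarith
  · have h1 := neg_le_abs (Real.log (8/(d:ℝ)))
    have h2 := neg_le_abs (Real.log t)
    have h3 := neg_le_abs (Real.log (1 - t))
    linarith [hlogA ▸ hge]

lemma measurable_log_one_sub (d : ℕ) :
    Measurable (fun θ : Fin d → ℝ =>
      Real.log |1 - (1 / (d:ℝ)) * ∑ i, Real.cos (2 * π * θ i)|) := by
  have hc : Continuous (fun θ : Fin d → ℝ => 1 - (1 / (d:ℝ)) * ∑ i, Real.cos (2 * π * θ i)) :=
    continuous_const.sub (continuous_const.mul (continuous_finset_sum _ fun i _ =>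
      Real.continuous_cos.comp (continuous_const.mul (continuous_apply i))))
  exact Real.measurable_log.comp hc.abs.measurable

lemma measurable_log_one_add (d : ℕ) :
    Measurable (fun θ : Fin d → ℝ =>
      Real.log |1 + (1 / (d:ℝ)) * ∑ i, Real.cos (2 * π * θ i)|) := by
  have hc : Continuous (fun θ : Fin d → ℝ => 1 + (1 / (d:ℝ)) * ∑ i, Real.cos (2 * π * θ i)) :=
    continuous_const.add (continuous_const.mul (continuous_finset_sum _ fun i _ =>
      Real.continuous_cos.comp (continuous_const.mul (continuous_apply i))))
  exact Real.measurable_log.comp hc.abs.measurable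

lemma integrable_log_one_sub (d : ℕ) (hd : 1 ≤ d) :
    Integrable (fun θ : Fin d → ℝ =>
        Real.log |1 - (1 / (d:ℝ)) * ∑ i, Real.cos (2 * π * θ i)|)
      (Measure.pi (fun _ : Fin d => volume.restrict (Set.Icc (0:ℝ) 1))) := by
  set φ : ℝ → ℝ := fun t =>
    (Real.log 2 + |Real.log (8 / (d:ℝ))|) + 2 * |Real.log t| + 2 * |Real.log (1 - t)|
    with hφdef
  have hφmeas : Measurable φ := by
    refine ((measurable_const.add ((Real.measurable_log.abs).const_mul 2)).add
      (((Real.measurable_log.comp (measurable_const.sub measurable_id)).abs).const_mul 2))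
  have hφint : Integrable φ (volume.restrict (Set.Icc (0:ℝ) 1)) := by
    exact ((integrable_const _).add (integrableOn_abs_log.const_mul 2)).add
      (integrableOn_abs_log_one_sub.const_mul 2)
  have hΦ : Integrable (fun θ : Fin d → ℝ => φ (θ ⟨0, hd⟩))
      (Measure.pi (fun _ : Fin d => volume.restrict (Set.Icc (0:ℝ) 1))) :=
    integrable_eval _ φ hφmeas hφint
  have hmem : ∀ᵐ θ ∂(Measure.pi (fun _ : Fin d => volume.restrict (Set.Icc (0:ℝ) 1))),
      θ (⟨0, hd⟩ : Fin d) ∈ Set.Ioo (0:ℝ) 1 := by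
    rw [ae_iff]
    have hnull : (volume.restrict (Set.Icc (0:ℝ) 1)) ((Set.Ioo (0:ℝ) 1)ᶜ) = 0 := by
      rw [Measure.restrict_apply measurableSet_Ioo.compl]
      have hss : (Set.Ioo (0:ℝ) 1)ᶜ ∩ Set.Icc 0 1 ⊆ {0, 1} := by
        rintro x ⟨hx1, hx2, hx3⟩
        simp only [Set.mem_compl_iff, Set.mem_Ioo, not_and, not_lt] at hx1
        simp only [Set.mem_insert_iff, Set.mem_singleton_iff]
        rcases eq_or_lt_of_le hx2 with h | h
        · exact Or.inl h.symm
        · exact Or.inr (le_antisymm hx3 (hx1 h))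
      exact measure_mono_null hss
        ((Set.Finite.insert _ (Set.finite_singleton _)).countable.measure_zero _)
    have := (eval_measurePreserving (⟨0, hd⟩ : Fin d)).measure_preimage
      (s := (Set.Ioo (0:ℝ) 1)ᶜ) (measurableSet_Ioo.compl.nullMeasurableSet)
    rw [hnull] at this
    exact this
  refine Integrable.mono hΦ (measurable_log_one_sub d).aestronglyMeasurable ?_
  filter_upwards [hmem] with θ hθ
  rw [Real.norm_eq_abs, Real.norm_eq_abs]
  exact le_trans (abs_log_one_sub_bound hd hθ) (le_abs_self _)

lemma integrable_cos_eval (d : ℕ) (i : Fin d) :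
    Integrable (fun θ : Fin d → ℝ => Real.cos (2 * π * θ i))
      (Measure.pi (fun _ : Fin d => volume.restrict (Set.Icc (0:ℝ) 1))) := by
  have hc : Continuous (fun t : ℝ => Real.cos (2 * π * t)) :=
    Real.continuous_cos.comp (continuous_const.mul continuous_id)
  exact integrable_eval i (fun t => Real.cos (2 * π * t)) hc.measurable
    (hc.continuousOn.integrableOn_compact isCompact_Icc)

lemma integral_avg_cos (d : ℕ) (hd : 1 ≤ d) :
    ∫ θ, (1 / (d:ℝ)) * ∑ i, Real.cos (2 * π * θ i)
      ∂(Measure.pi (fun _ : Fin d => volume.restrict (Set.Icc (0:ℝ) 1))) = 0 := by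
  rw [integral_const_mul]
  rw [integral_finset_sum _ (fun i _ => integrable_cos_eval d i)]
  have : ∀ i : Fin d, (∫ θ, Real.cos (2 * π * θ i)
      ∂(Measure.pi (fun _ : Fin d => volume.restrict (Set.Icc (0:ℝ) 1)))) = 0 := by
    intro i
    have hc : Continuous (fun t : ℝ => Real.cos (2 * π * t)) :=
      Real.continuous_cos.comp (continuous_const.mul continuous_id)
    rw [integral_eval i (fun t => Real.cos (2 * π * t)) hc.measurable]
    exact integral_cos01
  simp [this]

end AuxGrid

open Real MeasureTheory

theorem integral_log_one_add_avg_cos_nonpos (d : ℕ) (hd : 1 ≤ d) :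
    (∫ θ in (Set.univ.pi fun _ : Fin d => Set.Icc (0:ℝ) 1),
        Real.log |1 + (1 / (d : ℝ)) * ∑ i, Real.cos (2 * π * θ i)|) ≤ 0 ∧
    (∫ θ in (Set.univ.pi fun _ : Fin d => Set.Icc (0:ℝ) 1),
        Real.log |2 * d - ∑ i, 2 * Real.cos (2 * π * θ i)|) =
      Real.log (2 * d) +
        ∫ θ in (Set.univ.pi fun _ : Fin d => Set.Icc (0:ℝ) 1),
          Real.log |1 + (1 / (d : ℝ)) * ∑ i, Real.cos (2 * π * θ i)| := by
  have hd0 : (0:ℝ) < d := by exact_mod_cast hd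
  rw [restrict_box_eq_pi d]
  have hSd : MeasurePreserving (fun θ : Fin d → ℝ => fun i => Sh (θ i))
      (Measure.pi (fun _ : Fin d => volume.restrict (Set.Icc (0:ℝ) 1)))
      (Measure.pi (fun _ : Fin d => volume.restrict (Set.Icc (0:ℝ) 1))) :=
    measurePreserving_pi _ _ (fun _ => Sh_measurePreserving)
  have hcomp : ∀ θ : Fin d → ℝ,
      Real.log |1 - (1/(d:ℝ)) * ∑ i, Real.cos (2 * π * Sh (θ i))| =
      Real.log |1 + (1/(d:ℝ)) * ∑ i, Real.cos (2 * π * θ i)| := by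
    intro θ
    have hneg : ∑ i, Real.cos (2 * π * Sh (θ i)) = -∑ i, Real.cos (2 * π * θ i) := by
      simp [cos_Sh]
    rw [hneg, show (1:ℝ) - 1/(d:ℝ) * -(∑ i, Real.cos (2*π*θ i)) =
      1 + 1/(d:ℝ) * ∑ i, Real.cos (2*π*θ i) from by ring]
  have hint_eq : (∫ θ, Real.log |1 - (1/(d:ℝ)) * ∑ i, Real.cos (2 * π * θ i)|
        ∂(Measure.pi (fun _ : Fin d => volume.restrict (Set.Icc (0:ℝ) 1)))) =
      ∫ θ, Real.log |1 + (1/(d:ℝ)) * ∑ i, Real.cos (2 * π * θ i)|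
        ∂(Measure.pi (fun _ : Fin d => volume.restrict (Set.Icc (0:ℝ) 1))) := by
    have hmap := integral_map (φ := fun θ : Fin d → ℝ => fun i => Sh (θ i))
      (μ := Measure.pi (fun _ : Fin d => volume.restrict (Set.Icc (0:ℝ) 1)))
      hSd.measurable.aemeasurable (measurable_log_one_sub d).aestronglyMeasurable
    rw [hSd.map_eq] at hmap
    rw [hmap]
    exact integral_congr_ae (Filter.Eventually.of_forall fun θ => hcomp θ)
  have hint_f : Integrable (fun θ : Fin d → ℝ =>
      Real.log |1 + (1/(d:ℝ)) * ∑ i, Real.cos (2 * π * θ i)|)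
      (Measure.pi (fun _ : Fin d => volume.restrict (Set.Icc (0:ℝ) 1))) := by
    have hiff := hSd.integrable_comp (measurable_log_one_sub d).aestronglyMeasurable
    exact (hiff.2 (integrable_log_one_sub d hd)).congr
      (Filter.Eventually.of_forall fun θ => hcomp θ)
  constructor
  · have hg_int : Integrable (fun θ : Fin d → ℝ => (1/(d:ℝ)) * ∑ i, Real.cos (2*π*θ i))
        (Measure.pi (fun _ : Fin d => volume.restrict (Set.Icc (0:ℝ) 1))) :=
      (integrable_finset_sum _ (fun i _ => integrable_cos_eval d i)).const_mul _
    have hae : ∀ᵐ θ ∂(Measure.pi (fun _ : Fin d => volume.restrict (Set.Icc (0:ℝ) 1))),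
        Real.log |1 + (1/(d:ℝ)) * ∑ i, Real.cos (2*π*θ i)| ≤
          (1/(d:ℝ)) * ∑ i, Real.cos (2*π*θ i) := by
      filter_upwards [ae_sum_cos_ne_neg d hd] with θ hθ
      set S := ∑ i, Real.cos (2*π*θ i) with hS
      have hS_ge : -(d:ℝ) ≤ S := by
        have : ∑ _i : Fin d, (-1:ℝ) ≤ S := Finset.sum_le_sum fun i _ => Real.neg_one_le_cos _
        simpa using this
      have hnonneg : 0 ≤ 1 + (1/(d:ℝ)) * S := by
        have h1 : (1/(d:ℝ)) * (-(d:ℝ)) ≤ (1/(d:ℝ)) * S :=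
          mul_le_mul_of_nonneg_left hS_ge (by positivity)
        have h2 : (1/(d:ℝ)) * (-(d:ℝ)) = -1 := by field_simp
        linarith [h2 ▸ h1]
      have hne : 1 + (1/(d:ℝ)) * S ≠ 0 := by
        intro h0
        apply hθ
        have hd' : (d:ℝ) ≠ 0 := ne_of_gt hd0
        field_simp at h0
        linarith
      have hpos : 0 < 1 + (1/(d:ℝ)) * S := lt_of_le_of_ne hnonneg (Ne.symm hne)
      rw [abs_of_pos hpos]
      linarith [Real.log_le_sub_one_of_pos hpos]
    calc (∫ θ, Real.log |1 + (1/(d:ℝ)) * ∑ i, Real.cos (2*π*θ i)|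
            ∂(Measure.pi (fun _ : Fin d => volume.restrict (Set.Icc (0:ℝ) 1))))
        ≤ ∫ θ, (1/(d:ℝ)) * ∑ i, Real.cos (2*π*θ i)
            ∂(Measure.pi (fun _ : Fin d => volume.restrict (Set.Icc (0:ℝ) 1))) :=
          integral_mono_ae hint_f hg_int hae
      _ = 0 := integral_avg_cos d hd
  · have haeq : (fun θ : Fin d → ℝ => Real.log |2*(d:ℝ) - ∑ i, 2*Real.cos (2*π*θ i)|)
        =ᵐ[Measure.pi (fun _ : Fin d => volume.restrict (Set.Icc (0:ℝ) 1))]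
        (fun θ => Real.log (2*(d:ℝ)) +
          Real.log |1 - (1/(d:ℝ)) * ∑ i, Real.cos (2*π*θ i)|) := by
      filter_upwards [ae_sum_cos_ne_pos d hd] with θ hθ
      have hfact : 2*(d:ℝ) - ∑ i, 2*Real.cos (2*π*θ i) =
          (2*(d:ℝ)) * (1 - (1/(d:ℝ)) * ∑ i, Real.cos (2*π*θ i)) := by
        have h2 : ∑ i, 2*Real.cos (2*π*θ i) = 2 * ∑ i, Real.cos (2*π*θ i) := by
          rw [Finset.mul_sum]
        rw [h2]
        field_simp
      have habs : (1:ℝ) - (1/(d:ℝ)) * ∑ i, Real.cos (2*π*θ i) ≠ 0 := by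
        intro h0
        apply hθ
        have hd' : (d:ℝ) ≠ 0 := ne_of_gt hd0
        field_simp at h0
        linarith
      rw [hfact, abs_mul, abs_of_pos (by positivity : (0:ℝ) < 2*(d:ℝ)),
        Real.log_mul (by positivity) (abs_ne_zero.2 habs)]
    rw [integral_congr_ae haeq,
      integral_add (integrable_const _) (integrable_log_one_sub d hd),
      integral_const, hint_eq]
    simp
end
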